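/- arXiv:2202.03621 — 3 statements merged into one kernel-verified Lean document; each statement's English description precedes it below -/
import Mathlib

section
/- For all real x in [-1, 1], e^x ≤ 1 + x + (e - 2)·x². -/
open Nat

open NormedSpace in
lemma exp_tsum' (x : ℝ) : Real.exp x = ∑' n : ℕ, x ^ n / (n ! : ℝ) := by
  rw [Real.exp_eq_exp_ℝ, exp_eq_tsum_div]

theorem exp_le_quadratic_bound (x : ℝ) (hx : x ∈ Set.Icc (-1 : ℝ) 1) :
    Real.exp x ≤ 1 + x + (Real.exp 1 - 2) * x ^ 2 := by
  obtain ⟨h1, h2⟩ := hx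
  have hs : ∀ y : ℝ, Summable (fun n : ℕ => y ^ n / (n ! : ℝ)) := fun y =>
    Real.summable_pow_div_factorial y
  have hss : ∀ y : ℝ, Summable (fun n : ℕ => y ^ (n + 2) / ((n + 2)! : ℝ)) := fun y =>
    (summable_nat_add_iff 2).2 (hs y)
  have hsplit : ∀ y : ℝ, Real.exp y = 1 + y + ∑' n : ℕ, y ^ (n + 2) / ((n + 2)! : ℝ) := by
    intro y
    rw [exp_tsum' y, ← Summable.sum_add_tsum_nat_add 2 (hs y)]
    simp [Finset.sum_range_succ]
  rw [hsplit x, hsplit 1]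
  have habs : |x| ≤ 1 := abs_le.2 ⟨h1, h2⟩
  have key : ∑' n : ℕ, x ^ (n + 2) / ((n + 2)! : ℝ) ≤ x ^ 2 * ∑' n : ℕ, (1:ℝ) ^ (n + 2) / ((n + 2)! : ℝ) := by
    rw [← tsum_mul_left]
    refine Summable.tsum_le_tsum (fun n => ?_) (hss x) ((hss 1).mul_left _)
    have hp : x ^ (n + 2) ≤ x ^ 2 := by
      calc x ^ (n + 2) ≤ |x ^ (n + 2)| := le_abs_self _
        _ = |x| ^ (n + 2) := by rw [abs_pow]
        _ ≤ |x| ^ 2 := pow_le_pow_of_le_one (abs_nonneg x) habs (by omega)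
        _ = x ^ 2 := sq_abs x
    have hfac : (0:ℝ) < ((n + 2)! : ℝ) := by positivity
    rw [one_pow, mul_one_div]
    exact div_le_div_of_nonneg_right hp hfac.le
  nlinarith [key, sq_nonneg x, tsum_nonneg (L := SummationFilter.unconditional ℕ) (fun n : ℕ => by positivity : ∀ n : ℕ, (0:ℝ) ≤ 1 ^ (n + 2) / ((n + 2)! : ℝ))]
end

section
/- The function x ↦ (e^x - (1 + x))/x² is monotonically increasing on [-1, 1] \ {0}, and its value at x = 1 equals e - 2. -/
open Real Set

/-- `(x-1) e^x + 1 ≥ 0` for all `x`. -/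
lemma aux_gprime (x : ℝ) : 0 ≤ (x - 1) * Real.exp x + 1 := by
  have h := Real.add_one_le_exp (-x)
  have hx := Real.exp_pos x
  have h2 : (1 - x) * Real.exp x ≤ Real.exp (-x) * Real.exp x := by nlinarith
  rw [← Real.exp_add, neg_add_cancel, Real.exp_zero] at h2
  nlinarith

lemma aux_g_deriv (x : ℝ) : HasDerivAt (fun x : ℝ => (x - 2) * Real.exp x + x + 2)
    ((x - 1) * Real.exp x + 1) x := by
  have h1 : HasDerivAt (fun x : ℝ => (x - 2) * Real.exp x)
      (1 * Real.exp x + (x - 2) * Real.exp x) x :=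
    ((hasDerivAt_id x).sub_const 2).mul (Real.hasDerivAt_exp x)
  have h2 := (h1.add (hasDerivAt_id x)).add_const 2
  refine h2.congr_deriv ?_
  ring

/-- `g x = (x-2) e^x + x + 2` is monotone. -/
lemma aux_g_mono : Monotone (fun x : ℝ => (x - 2) * Real.exp x + x + 2) := by
  apply monotone_of_deriv_nonneg
  · exact fun x => (aux_g_deriv x).differentiableAt
  · intro x
    rw [(aux_g_deriv x).deriv]
    exact aux_gprime x

lemma aux_g_nonpos {x : ℝ} (hx : x ≤ 0) : (x - 2) * Real.exp x + x + 2 ≤ 0 := by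
  have := aux_g_mono hx
  simpa using this

lemma aux_g_nonneg {x : ℝ} (hx : 0 ≤ x) : 0 ≤ (x - 2) * Real.exp x + x + 2 := by
  have := aux_g_mono hx
  simpa using this

lemma aux_h_deriv (x : ℝ) : HasDerivAt (fun x : ℝ => Real.exp x - 1 - x - x ^ 2 / 2)
    (Real.exp x - 1 - x) x := by
  have h1 : HasDerivAt (fun x : ℝ => x ^ 2 / 2) x x := by
    have := (hasDerivAt_pow 2 x).div_const 2
    simpa using this
  exact (((Real.hasDerivAt_exp x).sub_const 1).sub (hasDerivAt_id x)).sub h1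

lemma aux_h_mono : Monotone (fun x : ℝ => Real.exp x - 1 - x - x ^ 2 / 2) := by
  apply monotone_of_deriv_nonneg
  · exact fun x => (aux_h_deriv x).differentiableAt
  · intro x
    rw [(aux_h_deriv x).deriv]
    nlinarith [Real.add_one_le_exp x]

/-- derivative of f at nonzero points -/
lemma aux_f_deriv {x : ℝ} (hx : x ≠ 0) :
    HasDerivAt (fun x : ℝ => (Real.exp x - (1 + x)) / x ^ 2)
      (((x - 2) * Real.exp x + x + 2) / x ^ 3) x := by
  have hnum : HasDerivAt (fun x : ℝ => Real.exp x - (1 + x)) (Real.exp x - 1) x := by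
    have := (Real.hasDerivAt_exp x).sub ((hasDerivAt_id x).const_add 1)
    exact this
  have hden : HasDerivAt (fun x : ℝ => x ^ 2) (2 * x ^ 1) x := hasDerivAt_pow 2 x
  have h := hnum.div hden (pow_ne_zero 2 hx)
  refine h.congr_deriv ?_
  field_simp
  ring

lemma aux_mono_on {s : Set ℝ} (hs : Convex ℝ s) (h0 : (0:ℝ) ∉ s)
    (hsign : ∀ x ∈ interior s, 0 ≤ ((x - 2) * Real.exp x + x + 2) / x ^ 3) :
    MonotoneOn (fun x : ℝ => (Real.exp x - (1 + x)) / x ^ 2) s := by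
  have hne : ∀ x ∈ s, x ≠ 0 := fun x hx h => h0 (h ▸ hx)
  apply monotoneOn_of_deriv_nonneg hs
  · apply ContinuousOn.div
    · exact (Real.continuous_exp.sub (continuous_const.add continuous_id)).continuousOn
    · exact (continuous_pow 2).continuousOn
    · intro x hx; exact pow_ne_zero 2 (hne x hx)
  · intro x hx
    exact (aux_f_deriv (hne x (interior_subset hx))).differentiableAt.differentiableWithinAt
  · intro x hx
    rw [(aux_f_deriv (hne x (interior_subset hx))).deriv]
    exact hsign x hx

theorem exp_ratio_monotone :
    MonotoneOn (fun x : ℝ => (Real.exp x - (1 + x)) / x ^ 2)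
      (Set.Icc (-1 : ℝ) 1 \ {0}) ∧
    (Real.exp 1 - (1 + 1)) / (1 : ℝ) ^ 2 = Real.exp 1 - 2 := by
  constructor
  · -- monotone on each side
    have hneg : MonotoneOn (fun x : ℝ => (Real.exp x - (1 + x)) / x ^ 2) (Ico (-1 : ℝ) 0) := by
      apply aux_mono_on (convex_Ico _ _) (by simp)
      intro x hx
      rw [interior_Ico] at hx
      have h1 : (x - 2) * Real.exp x + x + 2 ≤ 0 := aux_g_nonpos hx.2.le
      have h3 : x ^ 3 < 0 := Odd.pow_neg (by decide) hx.2
      rw [div_nonneg_iff]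
      right
      exact ⟨h1, h3.le⟩
    have hpos : MonotoneOn (fun x : ℝ => (Real.exp x - (1 + x)) / x ^ 2) (Ioc (0 : ℝ) 1) := by
      apply aux_mono_on (convex_Ioc _ _) (by simp)
      intro x hx
      rw [interior_Ioc] at hx
      have h1 : 0 ≤ (x - 2) * Real.exp x + x + 2 := aux_g_nonneg hx.1.le
      have h3 : 0 < x ^ 3 := pow_pos hx.1 3
      exact div_nonneg h1 h3.le
    -- bounds across the gap
    have hlt : ∀ x : ℝ, x < 0 → (Real.exp x - (1 + x)) / x ^ 2 ≤ 1 / 2 := by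
      intro x hx
      have h := aux_h_mono hx.le
      simp only [Real.exp_zero] at h
      have hx2 : (0:ℝ) < x ^ 2 := by nlinarith
      rw [div_le_div_iff₀ hx2 (by norm_num)]
      nlinarith
    have hgt : ∀ x : ℝ, 0 < x → 1 / 2 ≤ (Real.exp x - (1 + x)) / x ^ 2 := by
      intro x hx
      have h := aux_h_mono hx.le
      simp only [Real.exp_zero] at h
      have hx2 : (0:ℝ) < x ^ 2 := pow_pos hx 2
      rw [div_le_div_iff₀ (by norm_num) hx2]
      nlinarith
    intro a ha b hb hab
    obtain ⟨⟨ha1, ha2⟩, ha0⟩ := ha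
    obtain ⟨⟨hb1, hb2⟩, hb0⟩ := hb
    simp only [mem_singleton_iff] at ha0 hb0
    rcases lt_or_gt_of_ne ha0 with haneg | hapos
    · rcases lt_or_gt_of_ne hb0 with hbneg | hbpos
      · exact hneg ⟨ha1, haneg⟩ ⟨hb1, hbneg⟩ hab
      · exact le_trans (hlt a haneg) (hgt b hbpos)
    · have hbpos : 0 < b := lt_of_lt_of_le hapos hab
      exact hpos ⟨hapos, ha2⟩ ⟨hbpos, hb2⟩ hab
  · norm_num
end

section
/- Let V : {0,1,…,T} → ℝ be nondecreasing with V_0 = 0 and V_t ≤ 2·V_{t-1} whenever V_{t-1} > 0 and t ≥ 1. Then ∑_{t : V_{t-1} > 0} (V_t - V_{t-1})/√(V_{t-1}) ≤ (√2 + 1)·√(V_T). -/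
lemma telescope_Icc (g : ℕ → ℝ) (T : ℕ) :
    ∑ t ∈ Finset.Icc 1 T, (g t - g (t - 1)) = g T - g 0 := by
  induction T with
  | zero => simp
  | succ n ih =>
    rw [show Finset.Icc 1 (n+1) = insert (n+1) (Finset.Icc 1 n) by
      ext x; simp [Finset.mem_Icc]; omega]
    rw [Finset.sum_insert (by simp)]
    simp [ih]

theorem telescoping_variance_bound (T : ℕ) (V : ℕ → ℝ)
    (h0 : V 0 = 0) (hmono : Monotone V)
    (hdouble : ∀ t, 1 ≤ t → 0 < V (t - 1) → V t ≤ 2 * V (t - 1)) :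
    ∑ t ∈ (Finset.Icc 1 T).filter (fun t => 0 < V (t - 1)),
        (V t - V (t - 1)) / Real.sqrt (V (t - 1))
      ≤ (Real.sqrt 2 + 1) * Real.sqrt (V T) := by
  have hVnn : ∀ t, 0 ≤ V t := fun t => h0 ▸ hmono (Nat.zero_le t)
  set g : ℕ → ℝ := fun t => (Real.sqrt 2 + 1) * (Real.sqrt (V t) - Real.sqrt (V (t-1)))
  have hgnn : ∀ t, 1 ≤ t → 0 ≤ g t := by
    intro t ht
    apply mul_nonneg (by positivity)
    have : Real.sqrt (V (t-1)) ≤ Real.sqrt (V t) :=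
      Real.sqrt_le_sqrt (hmono (Nat.sub_le t 1))
    linarith
  calc ∑ t ∈ (Finset.Icc 1 T).filter (fun t => 0 < V (t - 1)),
        (V t - V (t - 1)) / Real.sqrt (V (t - 1))
      ≤ ∑ t ∈ (Finset.Icc 1 T).filter (fun t => 0 < V (t - 1)), g t := by
        apply Finset.sum_le_sum
        intro t ht
        simp only [Finset.mem_filter, Finset.mem_Icc] at ht
        obtain ⟨⟨ht1, _⟩, hpos⟩ := ht
        have hd := hdouble t ht1 hpos
        have hs : 0 < Real.sqrt (V (t-1)) := Real.sqrt_pos.mpr hpos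
        have hmle : Real.sqrt (V (t-1)) ≤ Real.sqrt (V t) :=
          Real.sqrt_le_sqrt (hmono (Nat.sub_le t 1))
        have h2 : Real.sqrt (V t) ≤ Real.sqrt 2 * Real.sqrt (V (t-1)) := by
          rw [← Real.sqrt_mul (by norm_num)]
          exact Real.sqrt_le_sqrt hd
        have hfac : V t - V (t-1) =
            (Real.sqrt (V t) - Real.sqrt (V (t-1))) *
            (Real.sqrt (V t) + Real.sqrt (V (t-1))) := by
          have := Real.sq_sqrt (hVnn t)
          have := Real.sq_sqrt (hVnn (t-1))
          nlinarith
        rw [hfac, div_le_iff₀ hs]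
        have hdiff : 0 ≤ Real.sqrt (V t) - Real.sqrt (V (t-1)) := by linarith
        have : Real.sqrt (V t) + Real.sqrt (V (t-1)) ≤
            (Real.sqrt 2 + 1) * Real.sqrt (V (t-1)) := by nlinarith
        calc (Real.sqrt (V t) - Real.sqrt (V (t-1))) *
              (Real.sqrt (V t) + Real.sqrt (V (t-1)))
            ≤ (Real.sqrt (V t) - Real.sqrt (V (t-1))) *
              ((Real.sqrt 2 + 1) * Real.sqrt (V (t-1))) := by
              exact mul_le_mul_of_nonneg_left this hdiff
          _ = g t * Real.sqrt (V (t-1)) := by simp [g]; ring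
    _ ≤ ∑ t ∈ Finset.Icc 1 T, g t := by
        apply Finset.sum_le_sum_of_subset_of_nonneg (Finset.filter_subset _ _)
        intro t ht _
        exact hgnn t (Finset.mem_Icc.mp ht).1
    _ = (Real.sqrt 2 + 1) * Real.sqrt (V T) := by
        simp only [g]
        rw [← Finset.mul_sum, telescope_Icc (fun t => Real.sqrt (V t)) T]
        simp [h0]
end
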